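/- Any two Gurarij spaces are isometrically isomorphic (uniqueness of the Gurarij space). -/

import Mathlib

open scoped BigOperators

noncomputable section GurarijAux

/-- Type synonym for the amalgamation construction, carrying no norm instance. -/
def GurAm (V W : Type) : Type := V × W

namespace GurAm

variable {V W : Type}

instance [AddCommGroup V] [AddCommGroup W] : AddCommGroup (GurAm V W) :=
  inferInstanceAs (AddCommGroup (V × W))

instance [AddCommGroup V] [AddCommGroup W] [Module ℝ V] [Module ℝ W] :
    Module ℝ (GurAm V W) := inferInstanceAs (Module ℝ (V × W))

instance [AddCommGroup V] [AddCommGroup W] [Module ℝ V] [Module ℝ W]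
    [Module.Finite ℝ V] [Module.Finite ℝ W] : Module.Finite ℝ (GurAm V W) :=
  inferInstanceAs (Module.Finite ℝ (V × W))

variable [NormedAddCommGroup V] [NormedSpace ℝ V]
  [NormedAddCommGroup W] [NormedSpace ℝ W]
  (X : Submodule ℝ V) (f : ↥X →ₗ[ℝ] W) (ε : ℝ)

/-- The amalgamation seminorm. -/
def amN (p : GurAm V W) : ℝ :=
  ⨅ x : X, (‖p.1 - (x : V)‖ + ‖p.2 + f x‖ + ε * ‖(x : V)‖)

variable {X f ε}

lemma amN_bdd (hε : 0 ≤ ε) (p : GurAm V W) :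
    BddBelow (Set.range fun x : X => (‖p.1 - (x : V)‖ + ‖p.2 + f x‖ + ε * ‖(x : V)‖)) := by
  refine ⟨0, ?_⟩
  rintro r ⟨x, rfl⟩
  positivity

lemma amN_le (hε : 0 ≤ ε) (p : GurAm V W) (x : X) :
    amN X f ε p ≤ ‖p.1 - (x : V)‖ + ‖p.2 + f x‖ + ε * ‖(x : V)‖ :=
  ciInf_le (amN_bdd hε p) x

lemma le_amN (p : GurAm V W) {c : ℝ}
    (h : ∀ x : X, c ≤ ‖p.1 - (x : V)‖ + ‖p.2 + f x‖ + ε * ‖(x : V)‖) :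
    c ≤ amN X f ε p :=
  le_ciInf h

lemma amN_nonneg (hε : 0 ≤ ε) (p : GurAm V W) : 0 ≤ amN X f ε p :=
  le_amN p fun x => by positivity

lemma amN_zero (hε : 0 ≤ ε) : amN X f ε 0 = 0 := by
  refine le_antisymm ?_ (amN_nonneg hε 0)
  have h := amN_le (f := f) hε (0 : GurAm V W) 0
  simpa [show (0 : GurAm V W).1 = (0:V) from rfl, show (0 : GurAm V W).2 = (0:W) from rfl] using h

lemma amN_neg_le (hε : 0 ≤ ε) (p : GurAm V W) : amN X f ε (-p) ≤ amN X f ε p := by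
  refine le_ciInf fun x => ?_
  have h := amN_le (f := f) hε (-p) (-x)
  refine h.trans_eq ?_
  have h1 : (-p : GurAm V W).1 = -(p.1) := rfl
  have h2 : (-p : GurAm V W).2 = -(p.2) := rfl
  rw [h1, h2, map_neg]
  rw [show ((-x : X) : V) = -(x : V) from rfl]
  rw [show -p.1 - -(x:V) = -(p.1 - (x:V)) by abel, show -p.2 + -(f x) = -(p.2 + f x) by abel,
    norm_neg, norm_neg, norm_neg]

lemma amN_neg (hε : 0 ≤ ε) (p : GurAm V W) : amN X f ε (-p) = amN X f ε p := by
  refine le_antisymm (amN_neg_le (f := f) hε p) ?_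
  have := amN_neg_le (f := f) hε (-p)
  simpa using this

lemma amN_add (hε : 0 ≤ ε) (p q : GurAm V W) :
    amN X f ε (p + q) ≤ amN X f ε p + amN X f ε q := by
  have key : ∀ (x y : X), amN X f ε (p + q) ≤
      (‖p.1 - (x : V)‖ + ‖p.2 + f x‖ + ε * ‖(x : V)‖) +
      (‖q.1 - (y : V)‖ + ‖q.2 + f y‖ + ε * ‖(y : V)‖) := by
    intro x y
    have h := amN_le (f := f) hε (p + q) (x + y)
    refine h.trans ?_
    have h1 : (p + q : GurAm V W).1 = p.1 + q.1 := rfl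
    have h2 : (p + q : GurAm V W).2 = p.2 + q.2 := rfl
    rw [h1, h2, map_add, show ((x + y : X) : V) = (x : V) + (y : V) from rfl]
    have e1 : ‖p.1 + q.1 - ((x:V) + (y:V))‖ ≤ ‖p.1 - (x:V)‖ + ‖q.1 - (y:V)‖ := by
      calc ‖p.1 + q.1 - ((x:V) + (y:V))‖ = ‖(p.1 - (x:V)) + (q.1 - (y:V))‖ := by
              congr 1; abel
        _ ≤ _ := norm_add_le _ _
    have e2 : ‖p.2 + q.2 + (f x + f y)‖ ≤ ‖p.2 + f x‖ + ‖q.2 + f y‖ := by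
      calc ‖p.2 + q.2 + (f x + f y)‖ = ‖(p.2 + f x) + (q.2 + f y)‖ := by
              congr 1; abel
        _ ≤ _ := norm_add_le _ _
    have e3 : ε * ‖(x:V) + (y:V)‖ ≤ ε * ‖(x:V)‖ + ε * ‖(y:V)‖ := by
      rw [← mul_add]; exact mul_le_mul_of_nonneg_left (norm_add_le _ _) hε
    linarith
  have step1 : ∀ y : X, amN X f ε (p + q) -
      (‖q.1 - (y : V)‖ + ‖q.2 + f y‖ + ε * ‖(y : V)‖) ≤ amN X f ε p := by
    intro y
    refine le_amN p fun x => ?_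
    have := key x y
    linarith
  have step2 : amN X f ε (p + q) - amN X f ε p ≤ amN X f ε q := by
    refine le_amN q fun y => ?_
    have := step1 y
    linarith
  linarith

lemma amN_smul_le (hε : 0 ≤ ε) (c : ℝ) (p : GurAm V W) :
    amN X f ε (c • p) ≤ |c| * amN X f ε p := by
  rcases eq_or_ne c 0 with rfl | hc
  · simp only [zero_smul, abs_zero, zero_mul]
    exact le_of_eq (amN_zero hε)
  · have hpos : (0:ℝ) < |c| := abs_pos.2 hc
    have key : ∀ x : X, amN X f ε (c • p) ≤
        |c| * (‖p.1 - (x : V)‖ + ‖p.2 + f x‖ + ε * ‖(x : V)‖) := by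
      intro x
      have h := amN_le (f := f) hε (c • p) (c • x)
      refine h.trans_eq ?_
      have h1 : (c • p : GurAm V W).1 = c • p.1 := rfl
      have h2 : (c • p : GurAm V W).2 = c • p.2 := rfl
      rw [h1, h2, map_smul, show ((c • x : X) : V) = c • (x : V) from rfl,
      show c • p.1 - c • (x:V) = c • (p.1 - (x:V)) by rw [smul_sub],
      show c • p.2 + c • (f x) = c • (p.2 + f x) by rw [smul_add],
      norm_smul, norm_smul, norm_smul, Real.norm_eq_abs]
      ring
    have h2 : amN X f ε (c • p) / |c| ≤ amN X f ε p := by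
      refine le_amN p fun x => ?_
      rw [div_le_iff₀ hpos]
      have := key x
      linarith [mul_comm (‖p.1 - (x : V)‖ + ‖p.2 + f x‖ + ε * ‖(x : V)‖) |c|,
        key x]
    have h3 := (div_le_iff₀ hpos).mp h2
    calc amN X f ε (c • p) ≤ amN X f ε p * |c| := h3
      _ = |c| * amN X f ε p := mul_comm _ _

lemma amN_lower (hε : 0 < ε)
    (hup : ∀ x : X, ‖f x‖ ≤ (1 + ε) * ‖(x : V)‖) (p : GurAm V W) :
    ε / (2 + 2 * ε) * (‖p.1‖ + ‖p.2‖) ≤ amN X f ε p := by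
  refine le_amN p fun x => ?_
  set S := ‖p.1‖ + ‖p.2‖ with hS
  set t := ‖(x : V)‖ with ht
  have ht0 : 0 ≤ t := norm_nonneg _
  have hS0 : 0 ≤ S := by positivity
  have hd : (0:ℝ) < 2 + 2 * ε := by linarith
  have e1 : ‖p.1‖ - t ≤ ‖p.1 - (x:V)‖ := by
    have := norm_sub_norm_le p.1 (x : V)
    linarith [this]
  have e2 : ‖p.2‖ - (1 + ε) * t ≤ ‖p.2 + f x‖ := by
    have h1 : ‖p.2‖ - ‖f x‖ ≤ ‖p.2 + f x‖ := by
      have := norm_sub_norm_le p.2 (-(f x))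
      simpa [sub_eq_add_neg] using this
    have := hup x
    linarith
  rcases le_or_gt S (t * (2 + 2 * ε)) with hcase | hcase
  · have h4 : ε / (2 + 2 * ε) * S ≤ ε * t := by
      rw [div_mul_eq_mul_div, div_le_iff₀ hd]
      nlinarith [mul_le_mul_of_nonneg_left hcase hε.le]
    have hn1 : (0:ℝ) ≤ ‖p.1 - (x:V)‖ := norm_nonneg _
    have hn2 : (0:ℝ) ≤ ‖p.2 + f x‖ := norm_nonneg _
    linarith
  · have h5 : ε / (2 + 2 * ε) * S ≤ S - 2 * t := by
      rw [div_mul_eq_mul_div, div_le_iff₀ hd]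
      nlinarith [mul_le_mul_of_nonneg_left hcase.le (show (0:ℝ) ≤ 2 + ε by linarith)]
    linarith

lemma amN_right (hε : 0 ≤ ε)
    (hup : ∀ x : X, ‖f x‖ ≤ (1 + ε) * ‖(x : V)‖) (w : W) :
    amN X f ε ((0, w) : V × W) = ‖w‖ := by
  refine le_antisymm ?_ ?_
  · have h := amN_le (f := f) hε ((0, w) : V × W) 0
    simpa using h
  · refine le_amN _ fun x => ?_
    have e1 : ‖w‖ - ‖f x‖ ≤ ‖w + f x‖ := by
      have := norm_sub_norm_le w (-(f x))
      simpa [sub_eq_add_neg] using this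
    have e2 : ‖((0,w) : V × W).1 - (x:V)‖ = ‖(x:V)‖ := by simp
    have := hup x
    rw [e2]
    have h2 : ((0,w) : V × W).2 = w := rfl
    rw [h2]
    linarith

lemma amN_left (hε : 0 ≤ ε)
    (hlow : ∀ x : X, (1 - ε) * ‖(x : V)‖ ≤ ‖f x‖) (v : V) :
    amN X f ε ((v, 0) : V × W) = ‖v‖ := by
  refine le_antisymm ?_ ?_
  · have h := amN_le (f := f) hε ((v, 0) : V × W) 0
    simpa using h
  · refine le_amN _ fun x => ?_
    have e1 : ‖v‖ - ‖(x:V)‖ ≤ ‖v - (x:V)‖ := norm_sub_norm_le v (x : V)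
    have e2 : ‖((0:W) + f x)‖ = ‖f x‖ := by rw [zero_add]
    have := hlow x
    have h1 : ((v, (0:W)) : V × W).1 = v := rfl
    have h2 : ((v, (0:W)) : V × W).2 = (0:W) := rfl
    rw [h1, h2, e2]
    linarith

lemma amN_graph (hε : 0 ≤ ε) (x : X) :
    amN X f ε (((x : V), -(f x)) : V × W) ≤ ε * ‖(x : V)‖ := by
  have h := amN_le (f := f) hε (((x : V), -(f x)) : V × W) x
  simpa using h

end GurAm

end GurarijAux

/-- A Banach space `G` has the Gurarij property if for every `ε > 0`, every
finite dimensional Banach space `F`, subspace `E ⊆ F` and isometric linear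
embedding `ψ : E → G`, there is an injective linear map `φ : F → G` extending
`ψ` with `(1−ε)‖x‖ < ‖φx‖ < (1+ε)‖x‖` for all nonzero `x ∈ F`. -/
def IsGurarij (G : Type*) [NormedAddCommGroup G] [NormedSpace ℝ G] : Prop :=
  ∀ ε : ℝ, 0 < ε →
    ∀ (F : Type) (_ : NormedAddCommGroup F) (_ : NormedSpace ℝ F)
      (_ : FiniteDimensional ℝ F) (E : Submodule ℝ F) (ψ : E →ₗᵢ[ℝ] G),
      ∃ φ : F →ₗ[ℝ] G, Function.Injective φ ∧ (∀ e : E, φ e = ψ e) ∧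
        ∀ x : F, x ≠ 0 → (1 - ε) * ‖x‖ < ‖φ x‖ ∧ ‖φ x‖ < (1 + ε) * ‖x‖

set_option maxHeartbeats 2000000 in
theorem gurarij_key {G : Type} [NormedAddCommGroup G] [NormedSpace ℝ G] (hG : IsGurarij G)
    (V : Type) [NormedAddCommGroup V] [NormedSpace ℝ V] [FiniteDimensional ℝ V]
    (X : Submodule ℝ V) (f : ↥X →ₗ[ℝ] G) (ε δ : ℝ) (hε : 0 < ε) (hδ : 0 < δ)
    (hlow : ∀ x : ↥X, (1 - ε) * ‖(x : V)‖ ≤ ‖f x‖)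
    (hup : ∀ x : ↥X, ‖f x‖ ≤ (1 + ε) * ‖(x : V)‖) :
    ∃ g : V →ₗ[ℝ] G, (∀ v : V, (1 - δ) * ‖v‖ ≤ ‖g v‖) ∧ (∀ v : V, ‖g v‖ ≤ (1 + δ) * ‖v‖) ∧
      ∀ x : ↥X, ‖g (x : V) - f x‖ ≤ 2 * ε * ‖(x : V)‖ := by
  classical
  haveI : FiniteDimensional ℝ ↥(LinearMap.range f) := inferInstance
  set W : Type := ↥(LinearMap.range f) with hW
  set f' : ↥X →ₗ[ℝ] W := f.rangeRestrict with hf'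
  have hf'norm : ∀ x : ↥X, ‖f' x‖ = ‖f x‖ := fun x => rfl
  have hlow' : ∀ x : ↥X, (1 - ε) * ‖(x : V)‖ ≤ ‖f' x‖ := fun x => (hf'norm x) ▸ hlow x
  have hup' : ∀ x : ↥X, ‖f' x‖ ≤ (1 + ε) * ‖(x : V)‖ := fun x => (hf'norm x) ▸ hup x
  let NN : AddGroupNorm (GurAm V W) :=
  { toFun := GurAm.amN X f' ε
    map_zero' := GurAm.amN_zero hε.le
    add_le' := GurAm.amN_add hε.le
    neg' := GurAm.amN_neg hε.le
    eq_zero_of_map_eq_zero' := by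
      intro p hp
      have hp' : GurAm.amN X f' ε p = 0 := hp
      have hl := GurAm.amN_lower hε hup' p
      rw [hp'] at hl
      have hc : (0:ℝ) < ε / (2 + 2 * ε) := by positivity
      have hS : ‖p.1‖ + ‖p.2‖ ≤ 0 := by
        by_contra hcon
        push_neg at hcon
        nlinarith
      have h1 : p.1 = 0 := norm_eq_zero.1 (le_antisymm (by
        have := norm_nonneg p.2; linarith) (norm_nonneg _))
      have h2 : p.2 = 0 := norm_eq_zero.1 (le_antisymm (by
        have := norm_nonneg p.1; linarith) (norm_nonneg _))
      show (p : V × W) = 0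
      exact Prod.ext_iff.2 ⟨h1, h2⟩ }
  letI iNACG : NormedAddCommGroup (GurAm V W) := NN.toNormedAddCommGroup
  have hnorm : ∀ q : GurAm V W, ‖q‖ = GurAm.amN X f' ε q := fun _ => rfl
  letI iNS : NormedSpace ℝ (GurAm V W) :=
  { norm_smul_le := fun a b => by
      rw [hnorm, hnorm, Real.norm_eq_abs]
      exact GurAm.amN_smul_le hε.le a b }
  haveI iFD : FiniteDimensional ℝ (GurAm V W) := inferInstanceAs (Module.Finite ℝ (V × W))
  let inr : W →ₗ[ℝ] GurAm V W :=
  { toFun := fun w => ((0, w) : V × W)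
    map_add' := fun a b => by
      show ((0, a + b) : V × W) = ((0:V) + 0, a + b)
      rw [add_zero]
    map_smul' := fun c a => by
      show ((0, c • a) : V × W) = c • ((0,a) : V × W)
      rw [Prod.smul_mk, smul_zero] }
  let inl : V →ₗ[ℝ] GurAm V W :=
  { toFun := fun v => ((v, 0) : V × W)
    map_add' := fun a b => by
      show ((a + b, (0:W)) : V × W) = (a + b, (0:W) + 0)
      rw [add_zero]
    map_smul' := fun c a => by
      show ((c • a, 0) : V × W) = c • ((a,0) : V × W)
      rw [Prod.smul_mk, smul_zero] }
  let Esub : Submodule ℝ (GurAm V W) := LinearMap.range inr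
  let ψ : ↥Esub →ₗᵢ[ℝ] G :=
  { toLinearMap :=
    { toFun := fun e => (((e : GurAm V W).2 : W) : G)
      map_add' := fun a b => rfl
      map_smul' := fun c a => rfl }
    norm_map' := by
      rintro ⟨e, w, hw⟩
      subst hw
      show ‖((w : W) : G)‖ = ‖inr w‖
      rw [hnorm]
      exact (GurAm.amN_right hε.le hup' w).symm }
  set δ' := min δ 1 with hδ'def
  have hδ'0 : 0 < δ' := lt_min hδ one_pos
  have hδ'δ : δ' ≤ δ := min_le_left _ _
  have hδ'1 : δ' ≤ 1 := min_le_right _ _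
  obtain ⟨φ, hinj, hext, hb⟩ := hG δ' hδ'0 (GurAm V W) iNACG iNS iFD Esub ψ
  refine ⟨φ.comp inl, ?_, ?_, ?_⟩
  · intro v
    rcases eq_or_ne v 0 with rfl | hv
    · simp
    · have hne : inl v ≠ 0 := by
        intro hcon
        apply hv
        have : ((v, (0:W)) : V × W).1 = (0 : GurAm V W).1 := by rw [← hcon]; rfl
        exact this
      have := (hb (inl v) hne).1
      have hn : ‖inl v‖ = ‖v‖ := by
        rw [hnorm]; exact GurAm.amN_left hε.le hlow' v
      rw [hn] at this
      have hv0 : (0:ℝ) ≤ ‖v‖ := norm_nonneg v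
      show (1 - δ) * ‖v‖ ≤ ‖φ (inl v)‖
      nlinarith
  · intro v
    rcases eq_or_ne v 0 with rfl | hv
    · simp
    · have hne : inl v ≠ 0 := by
        intro hcon
        apply hv
        have : ((v, (0:W)) : V × W).1 = (0 : GurAm V W).1 := by rw [← hcon]; rfl
        exact this
      have := (hb (inl v) hne).2
      have hn : ‖inl v‖ = ‖v‖ := by
        rw [hnorm]; exact GurAm.amN_left hε.le hlow' v
      rw [hn] at this
      have hv0 : (0:ℝ) ≤ ‖v‖ := norm_nonneg v
      show ‖φ (inl v)‖ ≤ (1 + δ) * ‖v‖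
      nlinarith
  · intro x
    have hmem : inr (f' x) ∈ Esub := LinearMap.mem_range_self inr (f' x)
    have hφfr : φ (inr (f' x)) = f x := by
      have := hext ⟨inr (f' x), hmem⟩
      rw [this]
      rfl
    have hdiff : φ.comp inl (x : V) - f x = φ (inl (x:V) - inr (f' x)) := by
      rw [map_sub, ← hφfr]
      rfl
    have hsub : inl (x:V) - inr (f' x) = (((x:V), -(f' x)) : V × W) := by
      show (((x:V),(0:W)) : V × W) - ((0, f' x) : V × W) = (((x:V), -(f' x)) : V × W)
      rw [Prod.mk_sub_mk, sub_zero, zero_sub]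
    rcases eq_or_ne (inl (x:V) - inr (f' x)) 0 with hz | hnz
    · rw [hdiff, hz, map_zero, norm_zero]
      positivity
    · have hb' := (hb _ hnz).2
      have hnle : ‖inl (x:V) - inr (f' x)‖ ≤ ε * ‖(x:V)‖ := by
        rw [hnorm, hsub]
        exact GurAm.amN_graph hε.le x
      have h0 : (0:ℝ) ≤ ‖inl (x:V) - inr (f' x)‖ := norm_nonneg _
      rw [hdiff]
      nlinarith

/-- Inverse of an almost-isometric linear map onto its range. -/
theorem gurarij_inv {G H : Type} [NormedAddCommGroup G] [NormedSpace ℝ G]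
    [NormedAddCommGroup H] [NormedSpace ℝ H]
    (X : Submodule ℝ G) (f : ↥X →ₗ[ℝ] H) (ε : ℝ) (hε : 0 < ε) (hε2 : ε ≤ 1/2)
    (hlow : ∀ x : ↥X, (1 - ε) * ‖(x : G)‖ ≤ ‖f x‖)
    (hup : ∀ x : ↥X, ‖f x‖ ≤ (1 + ε) * ‖(x : G)‖) :
    ∃ finv : ↥(LinearMap.range f) →ₗ[ℝ] G,
      (∀ u : ↥(LinearMap.range f), (1 - 2*ε) * ‖(u : H)‖ ≤ ‖finv u‖) ∧
      (∀ u : ↥(LinearMap.range f), ‖finv u‖ ≤ (1 + 2*ε) * ‖(u : H)‖) ∧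
      (∀ x : ↥X, finv ⟨f x, LinearMap.mem_range_self f x⟩ = (x : G)) := by
  have hinj : Function.Injective f := by
    intro x y hxy
    have h0 : f (x - y) = 0 := by rw [map_sub, hxy, sub_self]
    have := hlow (x - y)
    rw [h0, norm_zero] at this
    have hxy0 : ‖((x - y : ↥X) : G)‖ ≤ 0 := by nlinarith [norm_nonneg ((x - y : ↥X) : G)]
    have : ((x - y : ↥X) : G) = 0 := norm_le_zero_iff.1 hxy0
    have : (x - y : ↥X) = 0 := by exact_mod_cast this
    exact sub_eq_zero.1 this
  let e : ↥X ≃ₗ[ℝ] ↥(LinearMap.range f) := LinearEquiv.ofInjective f hinj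
  have he : ∀ x : ↥X, ((e x : ↥(LinearMap.range f)) : H) = f x := fun x =>
    LinearEquiv.ofInjective_apply f (h := hinj) x
  refine ⟨X.subtype.comp (e.symm : ↥(LinearMap.range f) →ₗ[ℝ] ↥X), ?_, ?_, ?_⟩
  · intro u
    set x := e.symm u with hx
    have hu : (u : H) = f x := by rw [← he x, hx, e.apply_symm_apply]
    have h1 := hup x
    rw [← hu] at h1
    show (1 - 2*ε) * ‖(u:H)‖ ≤ ‖(x : G)‖
    nlinarith [mul_le_mul_of_nonneg_left h1 (show (0:ℝ) ≤ 1 - 2*ε by linarith),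
      norm_nonneg ((x:↥X) : G), norm_nonneg (u : H), sq_nonneg ε]
  · intro u
    set x := e.symm u with hx
    have hu : (u : H) = f x := by rw [← he x, hx, e.apply_symm_apply]
    have h1 := hlow x
    rw [← hu] at h1
    show ‖(x : G)‖ ≤ (1 + 2*ε) * ‖(u:H)‖
    nlinarith [mul_le_mul_of_nonneg_left h1 (show (0:ℝ) ≤ 1 + 2*ε by linarith),
      norm_nonneg ((x:↥X) : G), norm_nonneg (u : H),
      mul_nonneg (mul_nonneg hε.le (show (0:ℝ) ≤ 1 - 2*ε by linarith))
        (norm_nonneg ((x:↥X) : G))]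
  · intro x
    have hu : (⟨f x, LinearMap.mem_range_self f x⟩ : ↥(LinearMap.range f)) = e x := by
      ext
      rw [he x]
    show (((e.symm ⟨f x, _⟩) : ↥X) : G) = (x : G)
    rw [hu, e.symm_apply_apply]

set_option maxHeartbeats 2000000 in
/-- One step of the back-and-forth construction. -/
theorem gurarij_step {G H : Type} [NormedAddCommGroup G] [NormedSpace ℝ G]
    [NormedAddCommGroup H] [NormedSpace ℝ H]
    (hG : IsGurarij G) (hH : IsGurarij H)
    (X : Submodule ℝ G) (hXfd : FiniteDimensional ℝ ↥X) (f : ↥X →ₗ[ℝ] H)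
    (ε δ : ℝ) (hε : 0 < ε) (hε8 : ε ≤ 1/8) (hδ : 0 < δ) (hδ1 : δ ≤ 1)
    (hlow : ∀ x : ↥X, (1 - ε) * ‖(x : G)‖ ≤ ‖f x‖)
    (hup : ∀ x : ↥X, ‖f x‖ ≤ (1 + ε) * ‖(x : G)‖)
    (aPt : G) (bPt : H) :
    ∃ (X' : Submodule ℝ G) (hle : X ≤ X') (f' : ↥X' →ₗ[ℝ] H),
      FiniteDimensional ℝ ↥X' ∧
      (∀ x : ↥X', (1 - δ) * ‖(x : G)‖ ≤ ‖f' x‖) ∧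
      (∀ x : ↥X', ‖f' x‖ ≤ (1 + δ) * ‖(x : G)‖) ∧
      (∀ x : ↥X, ‖f' (Submodule.inclusion hle x) - f x‖ ≤ 24 * ε * ‖(x : G)‖) ∧
      aPt ∈ X' ∧
      (∃ w : ↥X', ‖f' w - bPt‖ ≤ 8 * ε * ‖bPt‖) := by
  classical
  haveI := hXfd
  obtain ⟨finv, hinvlow, hinvup, hinvid⟩ :=
    gurarij_inv X f ε hε (by linarith) hlow hup
  set Y : Submodule ℝ H := LinearMap.range f ⊔ Submodule.span ℝ {bPt} with hYdef
  haveI : FiniteDimensional ℝ ↥Y := inferInstance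
  have hfY : ∀ x : ↥X, f x ∈ Y := fun x => Submodule.mem_sup_left (LinearMap.mem_range_self f x)
  have hbY : bPt ∈ Y := Submodule.mem_sup_right (Submodule.mem_span_singleton_self bPt)
  set X₁ : Submodule ℝ ↥Y := Submodule.comap Y.subtype (LinearMap.range f) with hX₁def
  let e1 : ↥X₁ ≃ₗ[ℝ] ↥(LinearMap.range f) :=
    Submodule.comapSubtypeEquivOfLe (le_sup_left : LinearMap.range f ≤ Y)
  have he1 : ∀ z : ↥X₁, ((e1 z : ↥(LinearMap.range f)) : H) = ((z : ↥Y) : H) :=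
    fun z => rfl
  have he1n : ∀ z : ↥X₁, ‖(e1 z : H)‖ = ‖(z : ↥Y)‖ := fun z => rfl
  set m1 : ↥X₁ →ₗ[ℝ] G := finv ∘ₗ e1.toLinearMap with hm1def
  have hm1low : ∀ z : ↥X₁, (1 - 2*ε) * ‖((z : ↥Y) : ↥Y)‖ ≤ ‖m1 z‖ := by
    intro z
    have := hinvlow (e1 z)
    rw [he1n z] at this
    exact this
  have hm1up : ∀ z : ↥X₁, ‖m1 z‖ ≤ (1 + 2*ε) * ‖(z : ↥Y)‖ := by
    intro z
    have := hinvup (e1 z)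
    rw [he1n z] at this
    exact this
  obtain ⟨h, hhlow, hhup, hhcl⟩ := gurarij_key hG ↥Y X₁ m1 (2*ε) ε
    (by linarith) hε hm1low hm1up
  -- fact A
  have factA : ∀ x : ↥X, ‖h ⟨f x, hfY x⟩ - (x : G)‖ ≤ 8 * ε * ‖(x : G)‖ := by
    intro x
    have hzmem : (⟨f x, hfY x⟩ : ↥Y) ∈ X₁ := LinearMap.mem_range_self f x
    set zx : ↥X₁ := ⟨⟨f x, hfY x⟩, hzmem⟩ with hzx
    have hm1z : m1 zx = (x : G) := by
      have : e1 zx = ⟨f x, LinearMap.mem_range_self f x⟩ := Subtype.ext rfl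
      show finv (e1 zx) = (x : G)
      rw [this]
      exact hinvid x
    have hclf : ‖h ⟨f x, hfY x⟩ - (x : G)‖ ≤ 2 * (2*ε) * ‖f x‖ := by
      calc ‖h ⟨f x, hfY x⟩ - (x : G)‖ = ‖h (zx : ↥Y) - m1 zx‖ := by rw [hm1z]
        _ ≤ 2 * (2*ε) * ‖(zx : ↥Y)‖ := hhcl zx
        _ = 2 * (2*ε) * ‖f x‖ := rfl
    have hfx := hup x
    nlinarith [norm_nonneg ((x : ↥X) : G), norm_nonneg (f x),
      mul_le_mul_of_nonneg_left hfx (show (0:ℝ) ≤ 2 * (2*ε) by linarith),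
      mul_nonneg (mul_nonneg hε.le (show (0:ℝ) ≤ 1 - ε by linarith))
        (norm_nonneg ((x : ↥X) : G))]
  set X' : Submodule ℝ G := (X ⊔ LinearMap.range h) ⊔ Submodule.span ℝ {aPt} with hX'def
  have hle : X ≤ X' := le_trans le_sup_left le_sup_left
  have hrh : LinearMap.range h ≤ X' := le_trans le_sup_right le_sup_left
  haveI : FiniteDimensional ℝ ↥X' := inferInstance
  obtain ⟨hinv, hhinvlow, hhinvup, hhinvid⟩ :=
    gurarij_inv Y h ε hε (by linarith) hhlow hhup
  set X₂ : Submodule ℝ ↥X' := Submodule.comap X'.subtype (LinearMap.range h) with hX₂def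
  let e2 : ↥X₂ ≃ₗ[ℝ] ↥(LinearMap.range h) := Submodule.comapSubtypeEquivOfLe hrh
  have he2n : ∀ z : ↥X₂, ‖(e2 z : G)‖ = ‖(z : ↥X')‖ := fun z => rfl
  set m2 : ↥X₂ →ₗ[ℝ] H := hinv ∘ₗ e2.toLinearMap with hm2def
  have hm2low : ∀ z : ↥X₂, (1 - 2*ε) * ‖(z : ↥X')‖ ≤ ‖m2 z‖ := by
    intro z
    have := hhinvlow (e2 z)
    rw [he2n z] at this
    exact this
  have hm2up : ∀ z : ↥X₂, ‖m2 z‖ ≤ (1 + 2*ε) * ‖(z : ↥X')‖ := by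
    intro z
    have := hhinvup (e2 z)
    rw [he2n z] at this
    exact this
  obtain ⟨f', hf'low, hf'up, hf'cl⟩ := gurarij_key hH ↥X' X₂ m2 (2*ε) δ
    (by linarith) hδ hm2low hm2up
  refine ⟨X', hle, f', inferInstance, hf'low, hf'up, ?_, ?_, ?_⟩
  · -- closeness to f on X
    intro x
    set yx : ↥Y := ⟨f x, hfY x⟩ with hyx
    set u : G := h yx with hu
    have huX' : u ∈ X' := hrh (LinearMap.mem_range_self h yx)
    set xh : ↥X' := Submodule.inclusion hle x with hxh
    set uh : ↥X' := ⟨u, huX'⟩ with huh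
    have hzmem : uh ∈ X₂ := LinearMap.mem_range_self h yx
    set z : ↥X₂ := ⟨uh, hzmem⟩ with hz
    have hA := factA x
    have hm2z : m2 z = f x := by
      have he2z : e2 z = ⟨u, LinearMap.mem_range_self h yx⟩ := Subtype.ext rfl
      show hinv (e2 z) = f x
      rw [he2z]
      exact hhinvid yx
    have ht2 : ‖f' uh - f x‖ ≤ 2 * (2*ε) * ‖u‖ := by
      have := hf'cl z
      rw [hm2z] at this
      exact this
    have hxcoe : ((xh : ↥X') : G) = (x : G) := rfl
    have ht1 : ‖f' xh - f' uh‖ ≤ (1 + δ) * ‖(x : G) - u‖ := by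
      calc ‖f' xh - f' uh‖ = ‖f' (xh - uh)‖ := by rw [map_sub]
        _ ≤ (1 + δ) * ‖((xh - uh : ↥X') : G)‖ := hf'up _
        _ = (1 + δ) * ‖(x : G) - u‖ := by
            rw [show ((xh - uh : ↥X') : G) = (x : G) - u from rfl]
    have hnu : ‖u‖ ≤ 2 * ‖(x : G)‖ := by
      have h1 : ‖u‖ ≤ ‖(x:G)‖ + ‖u - (x:G)‖ := by
        have := norm_add_le ((x:G)) (u - (x:G))
        simpa using this
      have h2 : ‖u - (x:G)‖ ≤ 8 * ε * ‖(x:G)‖ := hA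
      nlinarith [norm_nonneg ((x : ↥X) : G)]
    have hxu : ‖(x : G) - u‖ ≤ 8 * ε * ‖(x:G)‖ := by
      rw [norm_sub_rev]
      exact hA
    have htri : ‖f' xh - f x‖ ≤ ‖f' xh - f' uh‖ + ‖f' uh - f x‖ := by
      have heq : f' xh - f x = (f' xh - f' uh) + (f' uh - f x) := by abel
      rw [heq]
      exact norm_add_le _ _
    have hd0 : (0:ℝ) ≤ ‖(x:G)‖ := norm_nonneg _
    have e1' : (1+δ) * ‖(x:G) - u‖ ≤ (1+δ) * (8*ε*‖(x:G)‖) :=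
      mul_le_mul_of_nonneg_left hxu (by linarith)
    have e2' : (1+δ) * (8*ε*‖(x:G)‖) ≤ 16*ε*‖(x:G)‖ := by
      nlinarith [mul_nonneg hε.le hd0, mul_nonneg (mul_nonneg hδ.le hε.le) hd0]
    have e3' : 2*(2*ε)*‖u‖ ≤ 2*(2*ε)*(2*‖(x:G)‖) :=
      mul_le_mul_of_nonneg_left hnu (by linarith)
    linarith [htri, ht1, ht2, e1', e2', e3']
  · exact Submodule.mem_sup_right (Submodule.mem_span_singleton_self aPt)
  · -- approximate bPt
    set yb : ↥Y := ⟨bPt, hbY⟩ with hyb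
    set w0 : G := h yb with hw0
    have hw0X' : w0 ∈ X' := hrh (LinearMap.mem_range_self h yb)
    set wh : ↥X' := ⟨w0, hw0X'⟩ with hwh
    have hzmem : wh ∈ X₂ := LinearMap.mem_range_self h yb
    set z : ↥X₂ := ⟨wh, hzmem⟩ with hz
    have hm2z : m2 z = bPt := by
      have he2z : e2 z = ⟨w0, LinearMap.mem_range_self h yb⟩ := Subtype.ext rfl
      show hinv (e2 z) = bPt
      rw [he2z]
      exact hhinvid yb
    refine ⟨wh, ?_⟩
    have hcl := hf'cl z
    rw [hm2z] at hcl
    have hw0n : ‖w0‖ ≤ (1 + ε) * ‖bPt‖ := hhup yb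
    have hbn : (0:ℝ) ≤ ‖bPt‖ := norm_nonneg _
    have hwn : (0:ℝ) ≤ ‖w0‖ := norm_nonneg _
    have hcl' : ‖f' wh - bPt‖ ≤ 2 * (2*ε) * ‖w0‖ := hcl
    nlinarith [mul_le_mul_of_nonneg_left hw0n (show (0:ℝ) ≤ 2 * (2*ε) by linarith),
      mul_nonneg (mul_nonneg hε.le (show (0:ℝ) ≤ 1 - ε by linarith)) hbn]

/-- The tolerance sequence. -/
noncomputable def gurEps (n : ℕ) : ℝ := (1/8 : ℝ) * (1/2)^n

lemma gurEps_pos (n : ℕ) : 0 < gurEps n := by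
  unfold gurEps; positivity

lemma gurEps_le (n : ℕ) : gurEps n ≤ 1/8 := by
  unfold gurEps
  nlinarith [pow_le_one₀ (show (0:ℝ) ≤ 1/2 by norm_num) (show (1/2:ℝ) ≤ 1 by norm_num) (n := n),
    pow_nonneg (show (0:ℝ) ≤ 1/2 by norm_num) n]

lemma gurEps_le1 (n : ℕ) : gurEps n ≤ 1 := (gurEps_le n).trans (by norm_num)

lemma gurEps_succ (n : ℕ) : gurEps (n+1) = gurEps n / 2 := by
  unfold gurEps
  rw [pow_succ]
  ring

lemma gurEps_anti : ∀ m n : ℕ, m ≤ n → gurEps n ≤ gurEps m := by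
  intro m n h
  unfold gurEps
  have := pow_le_pow_of_le_one (show (0:ℝ) ≤ 1/2 by norm_num)
    (show (1/2:ℝ) ≤ 1 by norm_num) h
  nlinarith

lemma gurEps_tendsto : Filter.Tendsto gurEps Filter.atTop (nhds 0) := by
  have h := tendsto_pow_atTop_nhds_zero_of_lt_one
    (show (0:ℝ) ≤ 1/2 by norm_num) (show (1/2:ℝ) < 1 by norm_num)
  have h2 := h.const_mul (1/8 : ℝ)
  rw [mul_zero] at h2
  have hfun : gurEps = fun n => (1/8 : ℝ) * (1/2)^n := rfl
  rw [hfun]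
  exact h2

lemma gurEps_small : ∀ c : ℝ, 0 < c → ∃ N : ℕ, ∀ n ≥ N, gurEps n < c := by
  intro c hc
  have := gurEps_tendsto.eventually (eventually_lt_nhds hc)
  rwa [Filter.eventually_atTop] at this

/-- A stage of the back-and-forth construction. -/
structure GurStage (G H : Type) [NormedAddCommGroup G] [NormedSpace ℝ G]
    [NormedAddCommGroup H] [NormedSpace ℝ H] (e : ℝ) where
  X : Submodule ℝ G
  fd : FiniteDimensional ℝ ↥X
  f : ↥X →ₗ[ℝ] H
  lb : ∀ x : ↥X, (1 - e) * ‖(x : G)‖ ≤ ‖f x‖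
  ub : ∀ x : ↥X, ‖f x‖ ≤ (1 + e) * ‖(x : G)‖

set_option maxHeartbeats 4000000

/-- Uniqueness of the Gurarij space: any two separable Banach spaces with the
Gurarij property are isometrically isomorphic. -/
theorem gurarij_unique {G H : Type} [NormedAddCommGroup G] [NormedSpace ℝ G]
    [CompleteSpace G] [TopologicalSpace.SeparableSpace G]
    [NormedAddCommGroup H] [NormedSpace ℝ H] [CompleteSpace H]
    [TopologicalSpace.SeparableSpace H]
    (hG : IsGurarij G) (hH : IsGurarij H) :
    Nonempty (G ≃ₗᵢ[ℝ] H) := by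
  classical
  obtain ⟨a, ha⟩ := TopologicalSpace.exists_dense_seq G
  obtain ⟨b, hb⟩ := TopologicalSpace.exists_dense_seq H
  set bb : ℕ → H := fun n => b (Nat.unpair n).1 with hbb
  -- the step
  have stepEx : ∀ n (s : GurStage G H (gurEps n)), ∃ s' : GurStage G H (gurEps (n+1)),
      ∃ hle : s.X ≤ s'.X,
        (∀ x : ↥s.X, ‖s'.f (Submodule.inclusion hle x) - s.f x‖ ≤
          24 * gurEps n * ‖(x : G)‖) ∧
        a n ∈ s'.X ∧ ∃ w : ↥s'.X, ‖s'.f w - bb n‖ ≤ 8 * gurEps n * ‖bb n‖ := by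
    intro n s
    obtain ⟨X', hle, f', fd, l, u, cl, hA, hB⟩ :=
      gurarij_step hG hH s.X s.fd s.f (gurEps n) (gurEps (n+1)) (gurEps_pos n)
        (gurEps_le n) (gurEps_pos _) (gurEps_le1 _) s.lb s.ub (a n) (bb n)
    exact ⟨⟨X', fd, f', l, u⟩, hle, cl, hA, hB⟩
  -- base stage
  have s0 : GurStage G H (gurEps 0) := by
    refine ⟨⊥, inferInstance, 0, ?_, ?_⟩
    · intro x
      have hx : (x : G) = 0 := (Submodule.mem_bot ℝ).1 x.2
      simp [hx]
    · intro x
      have hx : (x : G) = 0 := (Submodule.mem_bot ℝ).1 x.2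
      simp [hx]
  -- the recursive sequence
  let seq : (n : ℕ) → GurStage G H (gurEps n) :=
    fun n => Nat.rec s0 (fun n s => (stepEx n s).choose) n
  have prop : ∀ n, ∃ hle : (seq n).X ≤ (seq (n+1)).X,
      (∀ x : ↥(seq n).X, ‖(seq (n+1)).f (Submodule.inclusion hle x) - (seq n).f x‖ ≤
        24 * gurEps n * ‖(x : G)‖) ∧
      a n ∈ (seq (n+1)).X ∧
      ∃ w : ↥(seq (n+1)).X, ‖(seq (n+1)).f w - bb n‖ ≤ 8 * gurEps n * ‖bb n‖ :=
    fun n => (stepEx n (seq n)).choose_spec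
  have hmono : ∀ n, (seq n).X ≤ (seq (n+1)).X := fun n => (prop n).choose
  have hclose : ∀ n (x : ↥(seq n).X),
      ‖(seq (n+1)).f (Submodule.inclusion (hmono n) x) - (seq n).f x‖ ≤
        24 * gurEps n * ‖(x : G)‖ := fun n => ((prop n).choose_spec).1
  have hA : ∀ n, a n ∈ (seq (n+1)).X := fun n => ((prop n).choose_spec).2.1
  have hB : ∀ n, ∃ w : ↥(seq (n+1)).X,
      ‖(seq (n+1)).f w - bb n‖ ≤ 8 * gurEps n * ‖bb n‖ := fun n => ((prop n).choose_spec).2.2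
  have hmono' : ∀ m n, m ≤ n → (seq m).X ≤ (seq n).X := by
    intro m n h
    induction n, h using Nat.le_induction with
    | base => exact le_rfl
    | succ n hmn ih => exact le_trans ih (hmono n)
  -- the pointwise approximation sequence
  set sfun : G → ℕ → H := fun x p =>
    if hx : x ∈ (seq p).X then (seq p).f ⟨x, hx⟩ else 0 with hsfun
  have hsfun_eq : ∀ (p : ℕ) (x : G) (hx : x ∈ (seq p).X),
      sfun x p = (seq p).f ⟨x, hx⟩ := by
    intro p x hx
    simp only [hsfun, dif_pos hx]
  have hstep : ∀ (p : ℕ) (x : G) (hx : x ∈ (seq p).X),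
      ‖sfun x (p+1) - sfun x p‖ ≤ 24 * gurEps p * ‖x‖ := by
    intro p x hx
    rw [hsfun_eq p x hx, hsfun_eq (p+1) x (hmono p hx)]
    exact hclose p ⟨x, hx⟩
  have hgap : ∀ (n p : ℕ), n ≤ p → ∀ (x : G) (hx : x ∈ (seq n).X),
      ‖sfun x p - sfun x n‖ ≤ 48 * (gurEps n - gurEps p) * ‖x‖ := by
    intro n p h x hx
    induction p, h using Nat.le_induction with
    | base => simp
    | succ p hnp ih =>
      have h1 := hstep p x (hmono' n p hnp hx)
      have heq : 48 * (gurEps n - gurEps (p+1)) * ‖x‖ =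
          24 * gurEps p * ‖x‖ + 48 * (gurEps n - gurEps p) * ‖x‖ := by
        rw [gurEps_succ]; ring
      have htri : ‖sfun x (p+1) - sfun x n‖ ≤
          ‖sfun x (p+1) - sfun x p‖ + ‖sfun x p - sfun x n‖ := by
        have he : sfun x (p+1) - sfun x n =
            (sfun x (p+1) - sfun x p) + (sfun x p - sfun x n) := by abel
        rw [he]; exact norm_add_le _ _
      linarith
  have hgap' : ∀ (n p : ℕ), n ≤ p → ∀ (x : G) (hx : x ∈ (seq n).X),
      ‖sfun x p - sfun x n‖ ≤ 48 * gurEps n * ‖x‖ := by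
    intro n p h x hx
    have := hgap n p h x hx
    nlinarith [gurEps_pos p, norm_nonneg x, gurEps_pos n]
  -- the union submodule
  set D : Submodule ℝ G := ⨆ n, (seq n).X with hD
  have hmemD : ∀ x : G, x ∈ D ↔ ∃ n, x ∈ (seq n).X := fun x =>
    Submodule.mem_iSup_of_chain ⟨fun n => (seq n).X, fun _ _ h => hmono' _ _ h⟩ x
  -- convergence
  have hconv : ∀ x : ↥D, ∃ l : H,
      Filter.Tendsto (fun p => sfun (x : G) p) Filter.atTop (nhds l) := by
    intro x
    obtain ⟨n₀, hn₀⟩ := (hmemD x).1 x.2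
    have hC : CauchySeq (fun p => sfun (x : G) p) := by
      rw [Metric.cauchySeq_iff]
      intro ρ hρ
      obtain ⟨N₁, hN₁⟩ := gurEps_small (ρ / (96 * (‖(x:G)‖ + 1)))
        (by positivity)
      refine ⟨max n₀ N₁, ?_⟩
      intro m hm n hn
      set N := max n₀ N₁
      have hxN : (x : G) ∈ (seq N).X := hmono' n₀ N (le_max_left _ _) hn₀
      have h1 := hgap' N m hm (x : G) hxN
      have h2 := hgap' N n hn (x : G) hxN
      have hE := hN₁ N (le_max_right _ _)
      have hxp : (0:ℝ) ≤ ‖(x:G)‖ := norm_nonneg _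
      have key : 96 * gurEps N * ‖(x:G)‖ < ρ := by
        have h3 : gurEps N * (96 * (‖(x:G)‖+1)) < ρ := by
          rw [lt_div_iff₀ (by positivity : (0:ℝ) < 96 * (‖(x:G)‖ + 1))] at hE
          linarith [hE]
        nlinarith [gurEps_pos N]
      have : dist (sfun (x:G) m) (sfun (x:G) n) ≤
          ‖sfun (x:G) m - sfun (x:G) N‖ + ‖sfun (x:G) n - sfun (x:G) N‖ := by
        rw [dist_eq_norm]
        have he : sfun (x:G) m - sfun (x:G) n =
            (sfun (x:G) m - sfun (x:G) N) - (sfun (x:G) n - sfun (x:G) N) := by abel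
        rw [he]
        exact norm_sub_le _ _
      linarith
    exact cauchySeq_tendsto_of_complete hC
  set T0 : ↥D → H := fun x => (hconv x).choose with hT0def
  have hT0 : ∀ x : ↥D,
      Filter.Tendsto (fun p => sfun (x : G) p) Filter.atTop (nhds (T0 x)) :=
    fun x => (hconv x).choose_spec
  -- additivity
  have hadd : ∀ x y : ↥D, T0 (x + y) = T0 x + T0 y := by
    intro x y
    obtain ⟨nx, hnx⟩ := (hmemD x).1 x.2
    obtain ⟨ny, hny⟩ := (hmemD y).1 y.2
    have hev : ∀ p ≥ max nx ny, sfun ((x:G) + (y:G)) p = sfun (x:G) p + sfun (y:G) p := by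
      intro p hp
      have hxp : (x:G) ∈ (seq p).X := hmono' nx p (le_trans (le_max_left _ _) hp) hnx
      have hyp : (y:G) ∈ (seq p).X := hmono' ny p (le_trans (le_max_right _ _) hp) hny
      have hxyp : (x:G) + (y:G) ∈ (seq p).X := (seq p).X.add_mem hxp hyp
      rw [hsfun_eq p _ hxyp, hsfun_eq p _ hxp, hsfun_eq p _ hyp]
      rw [show (⟨(x:G)+(y:G), hxyp⟩ : ↥(seq p).X) = ⟨(x:G), hxp⟩ + ⟨(y:G), hyp⟩ from rfl,
        map_add]
    have h2 : Filter.Tendsto (fun p => sfun ((x:G)+(y:G)) p) Filter.atTop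
        (nhds (T0 x + T0 y)) := by
      refine ((hT0 x).add (hT0 y)).congr' ?_
      filter_upwards [Filter.eventually_ge_atTop (max nx ny)] with p hp
      exact (hev p hp).symm
    have h1 : Filter.Tendsto (fun p => sfun ((x + y : ↥D) : G) p) Filter.atTop
        (nhds (T0 (x+y))) := hT0 (x + y)
    have hco : ((x + y : ↥D) : G) = (x:G) + (y:G) := rfl
    rw [hco] at h1
    exact tendsto_nhds_unique h1 h2
  -- smul
  have hsmul : ∀ (c : ℝ) (x : ↥D), T0 (c • x) = c • T0 x := by
    intro c x
    obtain ⟨nx, hnx⟩ := (hmemD x).1 x.2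
    have hev : ∀ p ≥ nx, sfun (c • (x:G)) p = c • sfun (x:G) p := by
      intro p hp
      have hxp : (x:G) ∈ (seq p).X := hmono' nx p hp hnx
      have hcxp : c • (x:G) ∈ (seq p).X := (seq p).X.smul_mem c hxp
      rw [hsfun_eq p _ hcxp, hsfun_eq p _ hxp]
      rw [show (⟨c • (x:G), hcxp⟩ : ↥(seq p).X) = c • ⟨(x:G), hxp⟩ from rfl, map_smul]
    have h2 : Filter.Tendsto (fun p => sfun (c • (x:G)) p) Filter.atTop
        (nhds (c • T0 x)) := by
      refine ((hT0 x).const_smul c).congr' ?_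
      filter_upwards [Filter.eventually_ge_atTop nx] with p hp
      exact (hev p hp).symm
    have h1 : Filter.Tendsto (fun p => sfun ((c • x : ↥D) : G) p) Filter.atTop
        (nhds (T0 (c • x))) := hT0 (c • x)
    have hco : ((c • x : ↥D) : G) = c • (x:G) := rfl
    rw [hco] at h1
    exact tendsto_nhds_unique h1 h2
  -- isometry
  have hnorm : ∀ x : ↥D, ‖T0 x‖ = ‖(x : G)‖ := by
    intro x
    obtain ⟨nx, hnx⟩ := (hmemD x).1 x.2
    have h1 : Filter.Tendsto (fun p => ‖sfun (x:G) p‖) Filter.atTop (nhds ‖T0 x‖) :=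
      (hT0 x).norm
    have hlo : ∀ᶠ p in Filter.atTop, (1 - gurEps p) * ‖(x:G)‖ ≤ ‖sfun (x:G) p‖ := by
      filter_upwards [Filter.eventually_ge_atTop nx] with p hp
      have hxp : (x:G) ∈ (seq p).X := hmono' nx p hp hnx
      rw [hsfun_eq p _ hxp]
      exact (seq p).lb ⟨(x:G), hxp⟩
    have hhi : ∀ᶠ p in Filter.atTop, ‖sfun (x:G) p‖ ≤ (1 + gurEps p) * ‖(x:G)‖ := by
      filter_upwards [Filter.eventually_ge_atTop nx] with p hp
      have hxp : (x:G) ∈ (seq p).X := hmono' nx p hp hnx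
      rw [hsfun_eq p _ hxp]
      exact (seq p).ub ⟨(x:G), hxp⟩
    have hlt : Filter.Tendsto (fun p => (1 - gurEps p) * ‖(x:G)‖) Filter.atTop
        (nhds ‖(x:G)‖) := by
      have h3 := (gurEps_tendsto.const_sub (1:ℝ)).mul_const ‖(x:G)‖
      simpa using h3
    have hht : Filter.Tendsto (fun p => (1 + gurEps p) * ‖(x:G)‖) Filter.atTop
        (nhds ‖(x:G)‖) := by
      have h3 := (gurEps_tendsto.const_add (1:ℝ)).mul_const ‖(x:G)‖
      simpa using h3
    have h2 : Filter.Tendsto (fun p => ‖sfun (x:G) p‖) Filter.atTop (nhds ‖(x:G)‖) :=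
      tendsto_of_tendsto_of_tendsto_of_le_of_le' hlt hht hlo hhi
    exact tendsto_nhds_unique h1 h2
  -- tail bound
  have htail : ∀ (n : ℕ) (x : ↥D) (hx : (x:G) ∈ (seq n).X),
      ‖T0 x - (seq n).f ⟨(x:G), hx⟩‖ ≤ 48 * gurEps n * ‖(x:G)‖ := by
    intro n x hx
    have h1 : Filter.Tendsto (fun p => ‖sfun (x:G) p - sfun (x:G) n‖) Filter.atTop
        (nhds ‖T0 x - sfun (x:G) n‖) := ((hT0 x).sub tendsto_const_nhds).norm
    have h2 : ∀ᶠ p in Filter.atTop, ‖sfun (x:G) p - sfun (x:G) n‖ ≤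
        48 * gurEps n * ‖(x:G)‖ := by
      filter_upwards [Filter.eventually_ge_atTop n] with p hp
      exact hgap' n p hp (x:G) hx
    have h3 := le_of_tendsto h1 h2
    rwa [hsfun_eq n _ hx] at h3
  -- assemble the linear isometry on D
  let T : ↥D →ₗᵢ[ℝ] H :=
  { toLinearMap :=
    { toFun := T0
      map_add' := hadd
      map_smul' := hsmul }
    norm_map' := hnorm }
  -- density of D
  have hDdense : Dense (D : Set G) := by
    have hsub : Set.range a ⊆ (D : Set G) := by
      rintro _ ⟨n, rfl⟩
      exact (hmemD (a n)).2 ⟨n+1, hA n⟩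
    exact ha.mono hsub
  -- extension
  have hiso : Isometry ((↑) : ↥D → G) := isometry_subtype_coe
  have hui : IsUniformInducing (D.subtypeL : ↥D →L[ℝ] G) := hiso.isUniformInducing
  have hdr : DenseRange (D.subtypeL : ↥D →L[ℝ] G) := by
    have : Set.range (D.subtypeL : ↥D →L[ℝ] G) = (D : Set G) := Subtype.range_coe
    rw [DenseRange, this]
    exact hDdense
  set Tbar : G →L[ℝ] H := T.toContinuousLinearMap.extend D.subtypeL with hTbar
  have hTe : ∀ x : ↥D, Tbar (x : G) = T0 x := by
    intro x
    exact ContinuousLinearMap.extend_eq T.toContinuousLinearMap hdr hui x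
  have hTbariso : ∀ v : G, ‖Tbar v‖ = ‖v‖ := by
    have hclosedset : IsClosed {v : G | ‖Tbar v‖ = ‖v‖} :=
      isClosed_eq (continuous_norm.comp Tbar.continuous) continuous_norm
    have hsub : (D : Set G) ⊆ {v : G | ‖Tbar v‖ = ‖v‖} := by
      intro v hv
      have : Tbar v = T0 ⟨v, hv⟩ := hTe ⟨v, hv⟩
      simp only [Set.mem_setOf_eq, this]
      exact hnorm ⟨v, hv⟩
    have := closure_minimal hsub hclosedset
    rw [hDdense.closure_eq] at this
    intro v
    exact this (Set.mem_univ v)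
  set Tiso : G →ₗᵢ[ℝ] H := ⟨Tbar.toLinearMap, hTbariso⟩ with hTiso
  -- dense range
  have hdenseR : DenseRange ⇑Tiso := by
    rw [Metric.denseRange_iff]
    intro y r hr
    obtain ⟨m, hm⟩ := Metric.denseRange_iff.1 hb y (r/2) (by linarith)
    obtain ⟨k, hk⟩ := gurEps_small (r / (2 * (200 * (‖b m‖ + 1)))) (div_pos hr (by positivity))
    set n : ℕ := Nat.pair m k with hn
    have hbbn : bb n = b m := by rw [hbb]; simp [hn, Nat.unpair_pair]
    have hepsn : gurEps n ≤ gurEps k := gurEps_anti k n (Nat.right_le_pair m k)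
    obtain ⟨w, hw⟩ := hB n
    rw [hbbn] at hw
    have hwD : (w : G) ∈ D := (hmemD _).2 ⟨n+1, w.2⟩
    set xh : ↥D := ⟨(w:G), hwD⟩ with hxh
    have hwmem : ((xh : G)) ∈ (seq (n+1)).X := w.2
    have ht : ‖T0 xh - (seq (n+1)).f ⟨(xh:G), hwmem⟩‖ ≤ 48 * gurEps (n+1) * ‖(xh:G)‖ :=
      htail (n+1) xh hwmem
    have hfw : (⟨(xh:G), hwmem⟩ : ↥(seq (n+1)).X) = w := rfl
    rw [hfw] at ht
    -- bound on ‖w‖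
    have hwlb := (seq (n+1)).lb w
    have hwub : ‖(seq (n+1)).f w‖ ≤ ‖b m‖ + 8 * gurEps n * ‖b m‖ := by
      have h1 : ‖(seq (n+1)).f w‖ ≤ ‖b m‖ + ‖(seq (n+1)).f w - b m‖ := by
        have := norm_add_le (b m) ((seq (n+1)).f w - b m)
        simpa using this
      linarith [hw]
    have hbm0 : (0:ℝ) ≤ ‖b m‖ := norm_nonneg _
    have hw0 : (0:ℝ) ≤ ‖(w:G)‖ := norm_nonneg _
    have hwnorm : ‖(w:G)‖ ≤ 4 * ‖b m‖ := by
      have he1 := gurEps_le (n+1)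
      have he0 := gurEps_pos (n+1)
      have hg := gurEps_le n
      have hg0 := gurEps_pos n
      nlinarith [hwlb, hwub]
    have hxhnorm : ‖(xh : G)‖ = ‖(w:G)‖ := rfl
    have hes : gurEps (n+1) ≤ gurEps n := gurEps_anti n (n+1) (Nat.le_succ n)
    have hg0 := gurEps_pos n
    have hclose2 : ‖T0 xh - b m‖ ≤ 200 * gurEps n * ‖b m‖ := by
      have htri : ‖T0 xh - b m‖ ≤ ‖T0 xh - (seq (n+1)).f w‖ + ‖(seq (n+1)).f w - b m‖ := by
        have he : T0 xh - b m = (T0 xh - (seq (n+1)).f w) + ((seq (n+1)).f w - b m) := by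
          abel
        rw [he]; exact norm_add_le _ _
      have h4 : 48 * gurEps (n+1) * ‖(xh:G)‖ ≤ 48 * gurEps n * (4 * ‖b m‖) := by
        rw [hxhnorm]
        have := mul_le_mul_of_nonneg_left hwnorm (show (0:ℝ) ≤ 48 * gurEps (n+1) by linarith [gurEps_pos (n+1)])
        have h5 : 48 * gurEps (n+1) * (4*‖b m‖) ≤ 48 * gurEps n * (4*‖b m‖) := by
          have : (0:ℝ) ≤ 4 * ‖b m‖ := by positivity
          nlinarith
        linarith
      nlinarith [ht, hw, htri]
    have hsmall2 : 200 * gurEps n * ‖b m‖ < r / 2 := by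
      have h6 := hk k le_rfl
      have h7 : gurEps n < r / (2 * (200 * (‖b m‖ + 1))) := lt_of_le_of_lt hepsn h6
      have h8 : (0:ℝ) < 2 * (200 * (‖b m‖ + 1)) := by positivity
      rw [lt_div_iff₀ h8] at h7
      nlinarith [gurEps_pos n]
    refine ⟨(w : G), ?_⟩
    have hTbarw : Tbar (w:G) = T0 xh := hTe xh
    have : dist y (Tiso (w:G)) ≤ dist y (b m) + dist (b m) (Tiso (w:G)) := dist_triangle _ _ _
    have hd2 : dist (b m) (Tiso (w:G)) = ‖T0 xh - b m‖ := by
      rw [dist_eq_norm]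
      have hTisow : Tiso (w:G) = T0 xh := hTbarw
      rw [hTisow, norm_sub_rev]
    linarith [hclose2, hsmall2, hm, this, hd2.le, hd2.ge,
      (dist_comm y (b m) : dist y (b m) = dist (b m) y)]
  -- closed range
  have hclosedR : IsClosed (Set.range ⇑Tiso) :=
    (Tiso.isometry.isUniformInducing.isComplete_range).isClosed
  have hsurj : Function.Surjective ⇑Tiso := by
    intro y
    have h1 : y ∈ closure (Set.range ⇑Tiso) := by
      rw [hdenseR.closure_eq]
      trivial
    rwa [hclosedR.closure_eq] at h1
  exact ⟨LinearIsometryEquiv.ofSurjective Tiso hsurj⟩
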